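/- Let G = (V, E) be a finite simple graph that is a forest (acyclic) with no isolated vertices, and let X ⊆ ∏_{v∈V} X_v be d-compatible with G. Let L ⊆ V be a set obtained by choosing, from each connected component of G, all of its leaves except exactly one. Then x_L d^{|V \ L|}-determines x_{V \ L}; in particular cdim(X) ≤ |L|. -/

import Mathlib

/-- `x_A` `d`-determines `x_B`. -/
def Determines {V : Type*} {F : V → Type*} (S : Set (∀ v, F v))
    (A B : Set V) (d : ℕ) : Prop :=
  ∀ c : ∀ a : A, F a,
    ((fun x : ∀ v, F v => fun b : B => x b) ''
      {x ∈ S | ∀ a : A, x a = c a}).encard ≤ (d : ℕ∞)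

/-- `S` is `d`-compatible with the graph `G`. -/
def Compatible {V : Type*} {F : V → Type*} (S : Set (∀ v, F v))
    (G : SimpleGraph V) (d : ℕ) : Prop :=
  ∀ v w, G.Adj v w →
    Determines S ((insert v (G.neighborSet v)) \ {w}) {w} d

/-- The combinatorial dimension of `S`. -/
noncomputable def cdim {V : Type*} {F : V → Type*} (S : Set (∀ v, F v)) : ℕ :=
  sInf {n : ℕ | ∃ A : Set V, A.ncard = n ∧ ∃ d : ℕ, Determines S A Set.univ d}

section DetLemmas

variable {V : Type*} {F : V → Type*} {S : Set (∀ v, F v)}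

lemma det_mono {A A' B B' : Set V} {d : ℕ} (h : Determines S A B d)
    (hA : A ⊆ A') (hB : B' ⊆ B) : Determines S A' B' d := by
  intro c
  have h0 := h (fun a => c ⟨a, hA a.2⟩)
  refine le_trans (le_trans (Set.encard_le_encard ?_) (Set.encard_image_le
    (fun y : (∀ b : B, F b) => fun b : B' => y ⟨b, hB b.2⟩) _)) h0
  rintro y ⟨x, ⟨hxS, hxc⟩, rfl⟩
  exact ⟨fun b : B => x b, ⟨x, ⟨hxS, fun a => hxc ⟨a, hA a.2⟩⟩, rfl⟩, rfl⟩

lemma det_self {A B : Set V} (hB : B ⊆ A) : Determines S A B 1 := by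
  intro c
  rw [Nat.cast_one]
  rw [Set.encard_le_one_iff]
  rintro y y' ⟨x, ⟨_, hxc⟩, rfl⟩ ⟨x', ⟨_, hxc'⟩, rfl⟩
  funext b
  have h1 := hxc ⟨b, hB b.2⟩
  have h2 := hxc' ⟨b, hB b.2⟩
  simp only at h1 h2 ⊢
  rw [h1, h2]

lemma encard_le_mul {α β : Type*} {s : Set α} (f : α → β) {e m : ℕ}
    (himg : (f '' s).encard ≤ (e : ℕ∞)) (hfib : ∀ b : β, {a ∈ s | f a = b}.encard ≤ (m : ℕ∞)) :
    s.encard ≤ ((e * m : ℕ) : ℕ∞) := by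
  classical
  have himg' := Set.encard_le_coe_iff_finite_ncard_le.mp himg
  have hfib' := fun b => Set.encard_le_coe_iff_finite_ncard_le.mp (hfib b)
  have hs : s.Finite := by
    have hsub : s ⊆ ⋃ b ∈ f '' s, {a ∈ s | f a = b} := by
      intro a ha
      exact Set.mem_biUnion (Set.mem_image_of_mem f ha) ⟨ha, rfl⟩
    exact Set.Finite.subset (Set.Finite.biUnion himg'.1 (fun b _ => (hfib' b).1)) hsub
  rw [Set.encard_le_coe_iff_finite_ncard_le]
  refine ⟨hs, ?_⟩
  set t := hs.toFinset with ht
  have hcoe : (t : Set α) = s := hs.coe_toFinset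
  have hcard : s.ncard = t.card := by rw [← hcoe, Set.ncard_coe_finset]
  rw [hcard]
  have key := Finset.card_le_mul_card_image (f := f) t m (fun b _ => by
    have : ((t.filter fun a => f a = b : Finset α) : Set α) = {a ∈ s | f a = b} := by
      ext a; simp [ht, hs.mem_toFinset]
    calc (t.filter fun a => f a = b).card
        = ({a ∈ s | f a = b}).ncard := by rw [← this, Set.ncard_coe_finset]
      _ ≤ m := (hfib' b).2)
  have himage : (t.image f).card ≤ e := by
    have : ((t.image f : Finset β) : Set β) = f '' s := by
      rw [Finset.coe_image, hcoe]
    calc (t.image f).card = (f '' s).ncard := by rw [← this, Set.ncard_coe_finset]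
      _ ≤ e := himg'.2
  calc t.card ≤ m * (t.image f).card := key
    _ ≤ m * e := Nat.mul_le_mul_left _ himage
    _ = e * m := Nat.mul_comm _ _

end DetLemmas

section DetLemmas2

variable {V : Type*} {F : V → Type*} {S : Set (∀ v, F v)}

lemma det_trans {A B C : Set V} {e m : ℕ} (h1 : Determines S A B e)
    (h2 : Determines S (A ∪ B) C m) : Determines S A C (e * m) := by
  classical
  intro c
  set T := {x ∈ S | ∀ a : A, x a = c a} with hT
  set g : (∀ v, F v) → ((∀ b : B, F b) × (∀ b : C, F b)) :=
    fun x => (fun b => x b, fun b => x b) with hg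
  have key : (g '' T).encard ≤ ((e * m : ℕ) : ℕ∞) := by
    refine encard_le_mul Prod.fst ?_ ?_
    · have : Prod.fst '' (g '' T) = (fun x : ∀ v, F v => fun b : B => x b) '' T := by
        rw [Set.image_image]
      rw [this]
      exact h1 c
    · intro b
      set c' : ∀ a : (A ∪ B : Set V), F a :=
        fun a => if h : (a : V) ∈ A then c ⟨a, h⟩ else b ⟨a, a.2.resolve_left h⟩ with hc'
      have h2' := h2 c'
      have hsub : Prod.snd '' {p ∈ g '' T | Prod.fst p = b} ⊆
          (fun x : ∀ v, F v => fun b : C => x b) '' {x ∈ S | ∀ a : (A ∪ B : Set V), x a = c' a} := by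
        rintro y ⟨p, ⟨⟨x, hxT, rfl⟩, hfst⟩, rfl⟩
        refine ⟨x, ⟨hxT.1, fun a => ?_⟩, rfl⟩
        by_cases hA : (a : V) ∈ A
        · simp only [hc', dif_pos hA]
          exact hxT.2 ⟨a, hA⟩
        · simp only [hc', dif_neg hA]
          exact congrFun hfst ⟨a, a.2.resolve_left hA⟩
      have hinj : Set.InjOn Prod.snd {p ∈ g '' T | Prod.fst p = b} := by
        rintro p ⟨_, hp⟩ q ⟨_, hq⟩ hpq
        exact Prod.ext (hp.trans hq.symm) hpq
      calc {p ∈ g '' T | Prod.fst p = b}.encard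
          = (Prod.snd '' {p ∈ g '' T | Prod.fst p = b}).encard := (hinj.encard_image).symm
        _ ≤ _ := Set.encard_le_encard hsub
        _ ≤ m := h2'
  calc ((fun x : ∀ v, F v => fun b : C => x b) '' T).encard
      = (Prod.snd '' (g '' T)).encard := by rw [Set.image_image]
    _ ≤ (g '' T).encard := Set.encard_image_le _ _
    _ ≤ _ := key

lemma det_absorb {A B C : Set V} {m : ℕ} (hB : B ⊆ A) (h : Determines S A C m) :
    Determines S A (B ∪ C) m := by
  intro c
  set T := {x ∈ S | ∀ a : A, x a = c a} with hT
  set ρ : (∀ x : (B ∪ C : Set V), F x) → (∀ x : C, F x) :=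
    fun y b => y ⟨b, Or.inr b.2⟩ with hρ
  have hinj : Set.InjOn ρ ((fun x : ∀ v, F v => fun b : (B ∪ C : Set V) => x b) '' T) := by
    rintro y ⟨x, hxT, rfl⟩ y' ⟨x', hxT', rfl⟩ hyy'
    funext a
    rcases a.2 with ha | ha
    · have h1 := hxT.2 ⟨a, hB ha⟩
      have h2 := hxT'.2 ⟨a, hB ha⟩
      simp only at h1 h2 ⊢
      rw [h1, h2]
    · exact congrFun hyy' ⟨a, ha⟩
  have himg : ρ '' ((fun x : ∀ v, F v => fun b : (B ∪ C : Set V) => x b) '' T) =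
      (fun x : ∀ v, F v => fun b : C => x b) '' T := by
    rw [Set.image_image]
  calc ((fun x : ∀ v, F v => fun b : (B ∪ C : Set V) => x b) '' T).encard
      = (ρ '' _).encard := (hinj.encard_image).symm
    _ = ((fun x : ∀ v, F v => fun b : C => x b) '' T).encard := by rw [himg]
    _ ≤ m := h c

lemma det_union_pow {A : Set V} {d : ℕ} {B : Set V} (hB : B.Finite)
    (h : ∀ w ∈ B, Determines S A {w} d) : Determines S A B (d ^ B.ncard) := by
  classical
  revert h
  refine Set.Finite.induction_on (motive := fun B _ => (∀ w ∈ B, Determines S A {w} d) → Determines S A B (d ^ B.ncard)) B hB ?_ ?_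
  · intro _
    rw [Set.ncard_empty, pow_zero]
    exact det_self (Set.empty_subset A)
  · intro a s ha hs ih h
    have h1 : Determines S A s (d ^ s.ncard) := ih (fun w hw => h w (Set.mem_insert_of_mem a hw))
    have h2 : Determines S (A ∪ s) {a} d :=
      det_mono (h a (Set.mem_insert a s)) Set.subset_union_left subset_rfl
    have h3 : Determines S (A ∪ s) (s ∪ {a}) d := det_absorb Set.subset_union_right h2
    rw [Set.union_singleton] at h3
    have h4 := det_trans h1 h3
    rw [Set.ncard_insert_of_notMem ha hs, pow_succ]
    exact h4

end DetLemmas2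

open SimpleGraph

section GraphLemmas

variable {V : Type*} [DecidableEq V] {G : SimpleGraph V}

lemma dist_add_takeUntil_le {v r u : V} (q : G.Walk v r) (hu : u ∈ q.support) :
    G.dist u r + (q.takeUntil u hu).length ≤ q.length := by
  have hlen := congrArg Walk.length (q.take_spec hu)
  rw [Walk.length_append] at hlen
  have h2 : G.dist u r ≤ (q.dropUntil u hu).length := SimpleGraph.dist_le _
  omega

lemma adj_dist (hacyc : G.IsAcyclic) {r v u : V} (hvr : G.Reachable v r) (h : G.Adj v u) :
    G.dist u r = G.dist v r + 1 ∨ G.dist v r = G.dist u r + 1 := by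
  have hur : G.Reachable u r := (h.symm.reachable).trans hvr
  obtain ⟨p, hp, hpl⟩ := hvr.exists_path_of_dist
  obtain ⟨p', hp', hpl'⟩ := hur.exists_path_of_dist
  have h1 : G.dist u r ≤ G.dist v r + 1 := by
    have := SimpleGraph.dist_le (Walk.cons h.symm p)
    rw [Walk.length_cons, hpl] at this
    exact this
  have h2 : G.dist v r ≤ G.dist u r + 1 := by
    have := SimpleGraph.dist_le (Walk.cons h p')
    rw [Walk.length_cons, hpl'] at this
    exact this
  have hne : G.dist u r ≠ G.dist v r := by
    intro heq
    have hu : u ∉ p.support := by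
      intro hmem
      have h3 := dist_add_takeUntil_le p hmem
      rw [hpl, ← heq] at h3
      have h4 : (p.takeUntil u hmem).length = 0 := by omega
      exact h.ne (Walk.eq_of_length_eq_zero h4)
    have hpath : (Walk.cons h.symm p).IsPath := hp.cons hu
    have hequ := hacyc.path_unique ⟨Walk.cons h.symm p, hpath⟩ ⟨p', hp'⟩
    have hlen := congrArg (fun q : G.Path u r => q.1.length) hequ
    simp only [Walk.length_cons] at hlen
    rw [hpl, hpl', heq] at hlen
    omega
  omega

lemma down_unique (hacyc : G.IsAcyclic) {r v u u' : V} (hvr : G.Reachable v r)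
    (hu : G.Adj v u) (hu' : G.Adj v u')
    (hd : G.dist u r < G.dist v r) (hd' : G.dist u' r < G.dist v r) : u = u' := by
  have hur : G.Reachable u r := (hu.symm.reachable).trans hvr
  have hu'r : G.Reachable u' r := (hu'.symm.reachable).trans hvr
  obtain ⟨p, hp, hpl⟩ := hur.exists_path_of_dist
  obtain ⟨p', hp', hpl'⟩ := hu'r.exists_path_of_dist
  have hvp : v ∉ p.support := by
    intro hmem
    have h3 := dist_add_takeUntil_le p hmem
    rw [hpl] at h3
    omega
  have hvp' : v ∉ p'.support := by
    intro hmem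
    have h3 := dist_add_takeUntil_le p' hmem
    rw [hpl'] at h3
    omega
  have hpath : (Walk.cons hu p).IsPath := hp.cons hvp
  have hpath' : (Walk.cons hu' p').IsPath := hp'.cons hvp'
  have hequ := hacyc.path_unique ⟨Walk.cons hu p, hpath⟩ ⟨Walk.cons hu' p', hpath'⟩
  have hsup := congrArg (fun q : G.Path v r => q.1.support) hequ
  simp only [Walk.support_cons] at hsup
  rw [p.support_eq_cons, p'.support_eq_cons] at hsup
  have := (List.cons_eq_cons.mp hsup).2
  exact (List.cons_eq_cons.mp this).1

end GraphLemmas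

section GraphLemmas2

variable {V : Type*} [DecidableEq V] {G : SimpleGraph V}

lemma up_neighbor [Fintype V] (hacyc : G.IsAcyclic) {r w : V} (hwr : G.Reachable w r)
    (hnb : (G.neighborSet w).Nonempty)
    (hdeg : G.dist w r ≠ 0 → (G.neighborSet w).ncard ≠ 1) :
    ∃ v, G.Adj w v ∧ G.dist v r = G.dist w r + 1 := by
  by_cases hm : G.dist w r = 0
  · obtain ⟨v, hv⟩ := hnb
    rcases adj_dist hacyc hwr hv with h | h
    · exact ⟨v, hv, h⟩
    · omega
  · have hpos : 0 < (G.neighborSet w).ncard := by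
      rw [Set.ncard_pos (Set.toFinite _)]; exact hnb
    have h2 : 1 < (G.neighborSet w).ncard := by
      have := hdeg hm; omega
    obtain ⟨v1, v2, hv1, hv2, hne⟩ := (Set.one_lt_ncard_iff (Set.toFinite _)).mp h2
    rcases adj_dist hacyc hwr hv1 with ha1 | ha1
    · exact ⟨v1, hv1, ha1⟩
    rcases adj_dist hacyc hwr hv2 with ha2 | ha2
    · exact ⟨v2, hv2, ha2⟩
    exact absurd (down_unique hacyc hwr hv1 hv2 (by omega) (by omega)) hne

lemma compat_subset (hacyc : G.IsAcyclic) {r w v : V} (hwr : G.Reachable w r)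
    (hadj : G.Adj w v) (hup : G.dist v r = G.dist w r + 1) :
    ∀ u ∈ (insert v (G.neighborSet v) : Set V) \ {w},
      G.Reachable u r ∧ G.dist w r < G.dist u r := by
  intro u hu
  have hvr : G.Reachable v r := (hadj.symm.reachable).trans hwr
  rcases hu.1 with rfl | hmem
  · exact ⟨hvr, by omega⟩
  · have hadjvu : G.Adj v u := hmem
    have hur : G.Reachable u r := (hadjvu.symm.reachable).trans hvr
    rcases adj_dist hacyc hvr hadjvu with h | h
    · exact ⟨hur, by omega⟩
    · have : u = w := down_unique hacyc hvr hadjvu hadj.symm (by omega) (by omega)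
      exact absurd this (by simpa using hu.2)

lemma dist_lt_card [Fintype V] {v r : V} (h : G.Reachable v r) :
    G.dist v r < Fintype.card V := by
  obtain ⟨p, hp, hl⟩ := h.exists_path_of_dist
  rw [← hl]
  exact hp.length_lt

end GraphLemmas2

set_option maxHeartbeats 1000000 in
/-- Pure Forest Bound: let `G` be a forest with no isolated vertices and `S` be
`d`-compatible with `G`.  If `L` consists of leaves of `G` and from each connected
component of `G` exactly one leaf is excluded from `L`, then `x_L`
`d^{|V \ L|}`-determines `x_{V \ L}`; in particular `cdim S ≤ |L|`. -/
theorem pure_forest_bound {V : Type*} [Fintype V] (G : SimpleGraph V)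
    {F : V → Type*} (S : Set (∀ v, F v)) (d : ℕ)
    (hacyc : G.IsAcyclic)
    (hniso : ∀ v : V, (G.neighborSet v).Nonempty)
    (hcomp : Compatible S G d)
    (L : Set V)
    (hleaf : ∀ v ∈ L, (G.neighborSet v).ncard = 1)
    (hchoice : ∀ v : V, ∃! w : V,
      G.Reachable v w ∧ (G.neighborSet w).ncard = 1 ∧ w ∉ L) :
    Determines S L Lᶜ (d ^ Lᶜ.ncard) ∧ cdim S ≤ L.ncard := by
  classical
  choose root hspec using hchoice
  have hP : ∀ v, G.Reachable v (root v) ∧ (G.neighborSet (root v)).ncard = 1 ∧ root v ∉ L :=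
    fun v => (hspec v).1
  have huniq : ∀ v y, (G.Reachable v y ∧ (G.neighborSet y).ncard = 1 ∧ y ∉ L) → y = root v :=
    fun v => (hspec v).2
  set A : ℕ → Set V := fun k => L ∪ {v | k ≤ G.dist v (root v)} with hA
  have key : ∀ k, Determines S (A k) Set.univ (d ^ (A k)ᶜ.ncard) := by
    intro k
    induction k with
    | zero =>
      have h0 : A 0 = Set.univ := by
        ext x; simp [hA]
      rw [h0, Set.compl_univ, Set.ncard_empty, pow_zero]
      exact det_self subset_rfl
    | succ k ih =>
      have hsub : A (k+1) ⊆ A k := by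
        rintro x (h | h)
        · exact Or.inl h
        · exact Or.inr (le_trans (Nat.le_succ k) h)
      have hstep : ∀ w ∈ A k \ A (k+1), Determines S (A (k+1)) {w} d := by
        intro w hw
        have hwL : w ∉ L := fun h => hw.2 (Or.inl h)
        have hk2 : ¬ (k+1 ≤ G.dist w (root w)) := fun h => hw.2 (Or.inr h)
        have hk1 : k ≤ G.dist w (root w) := hw.1.resolve_left hwL
        have hDw : G.dist w (root w) = k := by omega
        have hwr : G.Reachable w (root w) := (hP w).1
        have hdeg : G.dist w (root w) ≠ 0 → (G.neighborSet w).ncard ≠ 1 := by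
          intro hd0 hleafw
          have heq : w = root w := huniq w w ⟨Reachable.refl w, hleafw, hwL⟩
          exact hd0 (by rw [← heq]; exact G.dist_self)
        obtain ⟨v, hadj, hup⟩ := up_neighbor hacyc hwr (hniso w) hdeg
        have hsetp := compat_subset hacyc hwr hadj hup
        refine det_mono (hcomp v w hadj.symm) ?_ subset_rfl
        intro u hu
        obtain ⟨hur, hlt⟩ := hsetp u hu
        have hru : root w = root u := huniq u (root w) ⟨hur, (hP w).2.1, (hP w).2.2⟩
        refine Or.inr ?_
        show k+1 ≤ G.dist u (root u)
        rw [← hru]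
        omega
      have h6 := det_union_pow (Set.toFinite _) hstep
      have h7 : A (k+1) ∪ (A k \ A (k+1)) = A k := Set.union_diff_cancel hsub
      have h8 := det_trans h6 (by rw [h7]; exact ih)
      have hcompl : (A (k+1))ᶜ = (A k \ A (k+1)) ∪ (A k)ᶜ := by
        ext x
        simp only [Set.mem_compl_iff, Set.mem_union, Set.mem_diff]
        constructor
        · intro hx
          by_cases hxk : x ∈ A k
          · exact Or.inl ⟨hxk, hx⟩
          · exact Or.inr hxk
        · rintro (⟨_, hx⟩ | hx)
          · exact hx
          · exact fun h => hx (hsub h)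
      have hdisj : Disjoint (A k \ A (k+1)) (A k)ᶜ :=
        Set.disjoint_of_subset_left Set.diff_subset disjoint_compl_right
      have hcount : (A (k+1))ᶜ.ncard = (A k \ A (k+1)).ncard + (A k)ᶜ.ncard := by
        rw [hcompl, Set.ncard_union_eq hdisj (Set.toFinite _) (Set.toFinite _)]
      rw [hcount, pow_add]
      exact h8
  have hAN : A (Fintype.card V) = L := by
    ext x
    simp only [hA, Set.mem_union, Set.mem_setOf_eq]
    constructor
    · rintro (h | h)
      · exact h
      · exact absurd h (by have := dist_lt_card (hP x).1; omega)
    · exact Or.inl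
  have h1 : Determines S L Set.univ (d ^ Lᶜ.ncard) := by
    have := key (Fintype.card V)
    rwa [hAN] at this
  refine ⟨det_mono h1 subset_rfl (Set.subset_univ _), ?_⟩
  exact Nat.sInf_le ⟨L, rfl, _, h1⟩
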